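/- Let h ∈ [0,a] with a the real root of a³+2a²+3a-2 = 0, and define S = 2(1+h)/(h²+2h+3), N₁ = (h²+2h+3)/2, M = (1/2)(1+h)(1+N₁). Then M/N₁² ≤ S; equivalently, (1+h)(1+N₁)/(2N₁²) < 1/(1 + (1+h²)/(2(1+h))). -/
import Mathlib


theorem M_div_N1_sq_le_S (a : ℝ) (ha : a ^ 3 + 2 * a ^ 2 + 3 * a - 2 = 0)
    (ha1 : (0.477 : ℝ) < a) (ha2 : a < 0.478)
    (h : ℝ) (hh0 : 0 ≤ h) (hha : h ≤ a)
    (N₁ S M : ℝ) (hN₁ : N₁ = (h ^ 2 + 2 * h + 3) / 2)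
    (hS : S = 2 * (1 + h) / (h ^ 2 + 2 * h + 3))
    (hM : M = (1 + h) * (1 + N₁) / 2) :
    M / N₁ ^ 2 ≤ S ∧
      (1 + h) * (1 + N₁) / (2 * N₁ ^ 2) <
        1 / (1 + (1 + h ^ 2) / (2 * (1 + h))) := by
  have hD : (0:ℝ) < h ^ 2 + 2 * h + 3 := by nlinarith
  have hN : (3/2:ℝ) ≤ N₁ := by rw [hN₁]; nlinarith
  have h1 : (0:ℝ) < 1 + h := by linarith
  subst hN₁ hS hM
  constructor
  · rw [div_le_div_iff₀ (by positivity) hD]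
    nlinarith [sq_nonneg h, sq_nonneg (h^2 + 2*h + 1), mul_nonneg hh0 (sq_nonneg h)]
  · rw [div_lt_div_iff₀ (by positivity) (by positivity)]
    have : 1 + (1 + h ^ 2) / (2 * (1 + h)) = (h^2 + 2*h + 3) / (2*(1+h)) := by
      field_simp; ring
    rw [this]
    have hne : (1 + h) ≠ 0 := ne_of_gt h1
    have e2 : (1 + h) * (1 + (h ^ 2 + 2 * h + 3) / 2) * ((h ^ 2 + 2 * h + 3) / (2 * (1 + h)))
        = ((h ^ 2 + 2 * h + 3) + 2) * (h ^ 2 + 2 * h + 3) / 4 := by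
      field_simp; ring
    rw [e2]
    nlinarith [mul_pos hD hD, sq_nonneg h]
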